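/- Fix (x, t) ∈ ℝ × ℝ with |e^t · sinh x| < 1, and define u(x, t) = arccos(e^t · sinh x) on this open set. Then u satisfies the graphical curve shortening flow equation ∂u/∂t = (∂²u/∂x²) / (1 + (∂u/∂x)²) at (x, t). -/

import Mathlib

open Real

/-- Inner derivative formula: at any point where `|eᵗ sinh w| < 1`, the spatial
derivative of `arccos (eᵗ sinh w)` equals `-(eᵗ cosh w)/√(1 - (eᵗ sinh w)^2)`. -/
lemma hairclip_inner_deriv (t w : ℝ) (hw : |Real.exp t * Real.sinh w| < 1) :
    HasDerivAt (fun w : ℝ => Real.arccos (Real.exp t * Real.sinh w))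
      (-(Real.exp t * Real.cosh w) / Real.sqrt (1 - (Real.exp t * Real.sinh w) ^ 2)) w := by
  have h1 : Real.exp t * Real.sinh w ≠ -1 := by
    intro hy; rw [hy] at hw; simp at hw
  have h2 : Real.exp t * Real.sinh w ≠ 1 := by
    intro hy; rw [hy] at hw; simp at hw
  have hinner : HasDerivAt (fun w : ℝ => Real.exp t * Real.sinh w)
      (Real.exp t * Real.cosh w) w := (Real.hasDerivAt_sinh w).const_mul _
  have := (Real.hasDerivAt_arccos h1 h2).comp w hinner
  exact this.congr_deriv (by ring)

/-- The hairclip `u(x, t) = arccos (eᵗ sinh x)`, defined where `|eᵗ sinh x| < 1`,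
satisfies the graphical curve shortening flow equation `u_t = u_xx / (1 + u_x ^ 2)`. -/
theorem hairclip_satisfies_graphical_csf (x t : ℝ)
    (h : |Real.exp t * Real.sinh x| < 1) :
    (deriv (fun s : ℝ => Real.arccos (Real.exp s * Real.sinh x)) t) =
      (deriv (fun z : ℝ =>
          deriv (fun w : ℝ => Real.arccos (Real.exp t * Real.sinh w)) z) x) /
        (1 + (deriv (fun w : ℝ => Real.arccos (Real.exp t * Real.sinh w)) x) ^ 2) := by
  set A := Real.exp t with hA
  set s := Real.sinh x with hs
  set c := Real.cosh x with hc
  have hD : 0 < 1 - (A * s) ^ 2 := by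
    have : (A * s) ^ 2 < 1 := by
      rw [sq_lt_one_iff_abs_lt_one]; exact h
    linarith
  have hsqrtD : 0 < Real.sqrt (1 - (A * s) ^ 2) := Real.sqrt_pos.mpr hD
  have hsqD : Real.sqrt (1 - (A * s) ^ 2) ^ 2 = 1 - (A * s) ^ 2 := Real.sq_sqrt hD.le
  -- time derivative
  have ht : deriv (fun r : ℝ => Real.arccos (Real.exp r * Real.sinh x)) t
      = -(A * s) / Real.sqrt (1 - (A * s) ^ 2) := by
    have h1 : A * s ≠ -1 := by intro hy; rw [hy] at h; simp at h
    have h2 : A * s ≠ 1 := by intro hy; rw [hy] at h; simp at h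
    have hinner : HasDerivAt (fun r : ℝ => Real.exp r * Real.sinh x) (A * s) t := by
      simpa [hA, hs] using (Real.hasDerivAt_exp t).mul_const (Real.sinh x)
    have h3 : HasDerivAt (fun r : ℝ => Real.arccos (Real.exp r * Real.sinh x))
        (-(1 / Real.sqrt (1 - (A * s) ^ 2)) * (A * s)) t :=
      by have := (Real.hasDerivAt_arccos h1 h2).comp t hinner; exact this
    rw [h3.deriv]; ring
  -- spatial first derivative
  have hx1 : deriv (fun w : ℝ => Real.arccos (Real.exp t * Real.sinh w)) x
      = -(A * c) / Real.sqrt (1 - (A * s) ^ 2) := (hairclip_inner_deriv t x h).deriv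
  -- the first-derivative function agrees with the explicit formula near x
  have hopen : IsOpen {w : ℝ | |Real.exp t * Real.sinh w| < 1} := by
    have : Continuous fun w : ℝ => |Real.exp t * Real.sinh w| :=
      (continuous_const.mul Real.continuous_sinh).abs
    exact isOpen_lt this continuous_const
  have hmem : {w : ℝ | |Real.exp t * Real.sinh w| < 1} ∈ nhds x :=
    hopen.mem_nhds h
  have hEq : (fun z : ℝ => deriv (fun w : ℝ => Real.arccos (Real.exp t * Real.sinh w)) z)
      =ᶠ[nhds x] (fun z : ℝ =>
        -(Real.exp t * Real.cosh z) / Real.sqrt (1 - (Real.exp t * Real.sinh z) ^ 2)) := by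
    filter_upwards [hmem] with z hz
    exact (hairclip_inner_deriv t z hz).deriv
  -- derivative of the explicit formula at x
  have hden : HasDerivAt (fun z : ℝ => Real.sqrt (1 - (Real.exp t * Real.sinh z) ^ 2))
      (-(2 * (A * s) * (A * c)) / (2 * Real.sqrt (1 - (A * s) ^ 2))) x := by
    have hin : HasDerivAt (fun z : ℝ => 1 - (Real.exp t * Real.sinh z) ^ 2)
        (-(2 * (A * s) * (A * c))) x := by
      have h1 : HasDerivAt (fun z : ℝ => Real.exp t * Real.sinh z) (A * c) x :=
        (Real.hasDerivAt_sinh x).const_mul _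
      have := (h1.pow 2).const_sub 1
      exact this.congr_deriv (by push_cast; ring)
    have := (Real.hasDerivAt_sqrt (x := 1 - (A * s) ^ 2) (ne_of_gt hD)).comp x hin
    exact this.congr_deriv (by field_simp)
  have hnum : HasDerivAt (fun z : ℝ => -(Real.exp t * Real.cosh z)) (-(A * s)) x := by
    have := ((Real.hasDerivAt_cosh x).const_mul (Real.exp t)).neg
    exact this
  have hg : HasDerivAt (fun z : ℝ =>
      -(Real.exp t * Real.cosh z) / Real.sqrt (1 - (Real.exp t * Real.sinh z) ^ 2))
      ((-(A * s) * Real.sqrt (1 - (A * s) ^ 2) -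
        -(A * c) * (-(2 * (A * s) * (A * c)) / (2 * Real.sqrt (1 - (A * s) ^ 2)))) /
        Real.sqrt (1 - (A * s) ^ 2) ^ 2) x :=
    hnum.div hden (ne_of_gt hsqrtD)
  have hx2 : deriv (fun z : ℝ =>
      deriv (fun w : ℝ => Real.arccos (Real.exp t * Real.sinh w)) z) x
      = (-(A * s) * Real.sqrt (1 - (A * s) ^ 2) -
        -(A * c) * (-(2 * (A * s) * (A * c)) / (2 * Real.sqrt (1 - (A * s) ^ 2)))) /
        Real.sqrt (1 - (A * s) ^ 2) ^ 2 := by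
    rw [hEq.deriv_eq]
    exact hg.deriv
  rw [ht, hx1, hx2]
  set Q := Real.sqrt (1 - (A * s) ^ 2) with hQdef
  clear_value Q
  have hQ : Q ≠ 0 := ne_of_gt hsqrtD
  have hpos : (0:ℝ) < Q ^ 2 + (A * c) ^ 2 := by positivity
  field_simp
  ring
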